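/- Let Δ, d, k be positive integers with (d+1)k ≥ Δ + 1, and let G be an n-vertex graph with maximum degree at most Δ. Suppose that G has no equitable d-degenerate k-colouring but has a minimal near-equitable d-degenerate k-colouring φ. Then every accessible colour class V of φ satisfies |V| − |C_-| ≤ 1 (equivalently |V| ≤ |C_1| + 1) and V* ≠ ∅, i.e. G[V] is not (d−1)-degenerate. -/

import Mathlib

open Finset

attribute [local instance] Classical.propDecidable

variable {V : Type*} [Fintype V] [DecidableEq V]

/-- The subgraph of `G` induced on the vertex set `S` is `d`-degenerate: every nonempty
subset of `S` contains a vertex having at most `d` neighbours inside that subset. -/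
def DegenOn (G : SimpleGraph V) (d : ℕ) (S : Finset V) : Prop :=
  ∀ s : Finset V, s ⊆ S → s.Nonempty → ∃ v ∈ s, (s.filter (fun u => G.Adj v u)).card ≤ d

/-- The colour class of colour `i` under the colouring `f`. -/
def cls {k : ℕ} (f : V → Fin k) (i : Fin k) : Finset V :=
  Finset.univ.filter (fun v => f v = i)

/-- `f` is a `d`-degenerate `k`-colouring of `G`: each colour class induces a
`d`-degenerate subgraph. -/
def IsDegenColoring (G : SimpleGraph V) (d : ℕ) {k : ℕ} (f : V → Fin k) : Prop :=
  ∀ i, DegenOn G d (cls f i)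

/-- `f` is an equitable colouring: any two colour classes differ in size by at most one. -/
def IsEquitable {k : ℕ} (f : V → Fin k) : Prop :=
  ∀ i j, (cls f i).card ≤ (cls f j).card + 1

/-- `f` is a near-equitable `k`-colouring of an `n`-vertex graph (conditions (E1),(E2)):
with the colour classes sorted by size, `⌊n/k⌋ − 1 ≤ |C_1| ≤ ⌊n/k⌋ ≤ |C_2| ≤ … ≤
|C_{k−1}| ≤ ⌈n/k⌉ ≤ |C_k| ≤ ⌈n/k⌉ + 1`, and `2 ≤ |C_k| − |C_1| ≤ 3`.  Stated label-free:
all class sizes lie in `[⌊n/k⌋ − 1, ⌈n/k⌉ + 1]`, at most one class is smaller than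
`⌊n/k⌋`, at most one class is larger than `⌈n/k⌉`, some class has size `≤ ⌊n/k⌋`, some
class has size `≥ ⌈n/k⌉`, and the largest class exceeds the smallest by at least `2` and
at most `3`.  (Here `⌈n/k⌉ = (n + k - 1) / k` in natural division.) -/
def NearEquitable (n : ℕ) {k : ℕ} (f : V → Fin k) : Prop :=
  (∀ i, n / k - 1 ≤ (cls f i).card ∧ (cls f i).card ≤ (n + k - 1) / k + 1) ∧
  (Finset.univ.filter (fun i => (cls f i).card < n / k)).card ≤ 1 ∧
  (Finset.univ.filter (fun i => (n + k - 1) / k < (cls f i).card)).card ≤ 1 ∧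
  (∃ i, (cls f i).card ≤ n / k) ∧
  (∃ i, (n + k - 1) / k ≤ (cls f i).card) ∧
  (∃ i j, (cls f i).card + 2 ≤ (cls f j).card) ∧
  (∀ i j, (cls f j).card ≤ (cls f i).card + 3)

/-- The vertex `v` is movable to the colour class of colour `j`: `v` has a different
colour, and adding `v` to that class keeps it `d`-degenerate. -/
def Movable (G : SimpleGraph V) (d : ℕ) {k : ℕ} (f : V → Fin k) (v : V) (j : Fin k) :
    Prop :=
  f v ≠ j ∧ DegenOn G d (insert v (cls f j))

/-- Arc of the auxiliary digraph `D`: there is an arc from colour `i` to colour `j`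
(`i ≠ j`) iff some vertex of class `i` is movable to class `j`. -/
def MvArc (G : SimpleGraph V) (d : ℕ) {k : ℕ} (f : V → Fin k) (i j : Fin k) : Prop :=
  i ≠ j ∧ ∃ v, f v = i ∧ Movable G d f v j

/-- Class `i` is accessible to class `j`: `D` has a (possibly trivial) directed path from
`i` to `j`. -/
def AccTo (G : SimpleGraph V) (d : ℕ) {k : ℕ} (f : V → Fin k) : Fin k → Fin k → Prop :=
  Relation.ReflTransGen (MvArc G d f)

/-- Accessibility within the subdigraph of `D` induced on the set `S` of colours. -/
def AccToWithin (G : SimpleGraph V) (d : ℕ) {k : ℕ} (f : V → Fin k)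
    (S : Finset (Fin k)) : Fin k → Fin k → Prop :=
  Relation.ReflTransGen (fun i j => i ∈ S ∧ j ∈ S ∧ MvArc G d f i j)

/-- Class `i` has minimum size among all colour classes. -/
def IsMinClass {k : ℕ} (f : V → Fin k) (i : Fin k) : Prop :=
  ∀ j, (cls f i).card ≤ (cls f j).card

/-- Class `i` is accessible: it is accessible to some colour class of minimum size. -/
def Accessible (G : SimpleGraph V) (d : ℕ) {k : ℕ} (f : V → Fin k) (i : Fin k) : Prop :=
  ∃ j, IsMinClass f j ∧ AccTo G d f i j

/-- `𝒜`: the set of accessible colours. -/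
noncomputable def Aset (G : SimpleGraph V) (d : ℕ) {k : ℕ} (f : V → Fin k) :
    Finset (Fin k) :=
  Finset.univ.filter (fun i => Accessible G d f i)

/-- `ℬ`: the set of non-accessible colours. -/
noncomputable def Bset (G : SimpleGraph V) (d : ℕ) {k : ℕ} (f : V → Fin k) :
    Finset (Fin k) :=
  Finset.univ.filter (fun i => ¬ Accessible G d f i)

/-- `A`: the union of the accessible colour classes. -/
noncomputable def Averts (G : SimpleGraph V) (d : ℕ) {k : ℕ} (f : V → Fin k) : Finset V :=
  Finset.univ.filter (fun v => Accessible G d f (f v))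

/-- `B`: the union of the non-accessible colour classes. -/
noncomputable def Bverts (G : SimpleGraph V) (d : ℕ) {k : ℕ} (f : V → Fin k) : Finset V :=
  Finset.univ.filter (fun v => ¬ Accessible G d f (f v))

/-- The colours used by the subdigraphs `D_1, …, D_{i-1}` preceding `D_i`. -/
def UsedBefore {k q : ℕ} (𝒟 : Fin q → Finset (Fin k)) (i : Fin q) : Finset (Fin k) :=
  (Finset.univ.filter (fun i' => i' < i)).biUnion 𝒟

/-- `(𝒟, trm)` is the decomposition `D_1, …, D_q` of `𝒜` with terminals
`trm 1, …, trm q`: at each step `i`, `trm i` is the smallest-index minimum-size colour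
class not yet used (here "smallest index" is the smallest colour, the classes being
labelled in non-decreasing order of size), `D_i` consists of the unused accessible classes
accessible to `trm i`, the process exhausts all minimum-size classes, and every accessible
class belongs to some `D_i`. -/
def IsDecomp (G : SimpleGraph V) (d : ℕ) {k : ℕ} (f : V → Fin k) {q : ℕ}
    (𝒟 : Fin q → Finset (Fin k)) (trm : Fin q → Fin k) : Prop :=
  (∀ i : Fin q,
      IsMinClass f (trm i) ∧
      trm i ∉ UsedBefore 𝒟 i ∧
      (∀ j, IsMinClass f j → j ∉ UsedBefore 𝒟 i → trm i ≤ j) ∧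
      (∀ u, u ∈ 𝒟 i ↔
        Accessible G d f u ∧ u ∉ UsedBefore 𝒟 i ∧ AccTo G d f u (trm i))) ∧
  (∀ j, IsMinClass f j → ∃ i, j ∈ 𝒟 i) ∧
  (∀ u, Accessible G d f u → ∃ i, u ∈ 𝒟 i)

/-- `𝒯` for the choice `U` of removed class: the classes of `D_- − U` (here `Dl` is the
vertex set of `D_-` and `Cm` its terminal `C_-`) that are non-accessible to `C_-` in
`D_- − U`. -/
noncomputable def TSet (G : SimpleGraph V) (d : ℕ) {k : ℕ} (f : V → Fin k)
    (Dl : Finset (Fin k)) (Cm U : Fin k) : Finset (Fin k) :=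
  (Dl.erase U).filter (fun W => ¬ AccToWithin G d f (Dl.erase U) W Cm)

/-- `U` is a valid choice of `U_-`: it belongs to `D_-` and minimises the number of
classes of `D_- − U` that are non-accessible to `C_-` there. -/
def IsUminus (G : SimpleGraph V) (d : ℕ) {k : ℕ} (f : V → Fin k)
    (Dl : Finset (Fin k)) (Cm U : Fin k) : Prop :=
  U ∈ Dl ∧ ∀ U' ∈ Dl, (TSet G d f Dl Cm U).card ≤ (TSet G d f Dl Cm U').card

/-- `e` is a degeneracy ordering of the induced subgraph `G[S]` for the parameter `d`. -/
def IsDegOrdOn (G : SimpleGraph V) (d : ℕ) (S : Finset V)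
    (e : Fin S.card ≃ {x // x ∈ S}) : Prop :=
  ∀ i, (Finset.univ.filter (fun j => j < i ∧ G.Adj (e i : V) (e j : V))).card ≤ d

/-- The parameter `p` of a degeneracy ordering of `G[S]`: the largest (1-based) index
whose vertex has exactly `d` earlier neighbours (`0` if none). -/
noncomputable def ordPOn (G : SimpleGraph V) (d : ℕ) (S : Finset V)
    (e : Fin S.card ≃ {x // x ∈ S}) : ℕ :=
  (Finset.univ.filter (fun i =>
    (Finset.univ.filter (fun j => j < i ∧ G.Adj (e i : V) (e j : V))).card = d)).sup
      (fun i => (i : ℕ) + 1)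

/-- `p(G[S])`: the minimum of `ordPOn` over all degeneracy orderings of `G[S]`. -/
noncomputable def pMinOn (G : SimpleGraph V) (d : ℕ) (S : Finset V) : ℕ :=
  sInf {p | ∃ e : Fin S.card ≃ {x // x ∈ S}, IsDegOrdOn G d S e ∧ ordPOn G d S e = p}

/-- `V*` of the ordering `e` of `G[S]`: the set of its first `ordPOn G d S e` vertices. -/
noncomputable def VstarOf (G : SimpleGraph V) (d : ℕ) (S : Finset V)
    (e : Fin S.card ≃ {x // x ∈ S}) : Finset V :=
  (Finset.univ.filter (fun i : Fin S.card => (i : ℕ) < ordPOn G d S e)).image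
    (fun i => (e i : V))

/-- The size of the largest colour class, `|C_k|`. -/
def maxS {k : ℕ} (f : V → Fin k) : ℕ := Finset.univ.sup (fun i => (cls f i).card)

/-- The size of the smallest colour class, `|C_1|`. -/
noncomputable def minS {k : ℕ} (f : V → Fin k) : ℕ := sInf {m | ∃ i, (cls f i).card = m}

/-- `Σ_{V ∈ 𝒯} |V*| = Σ_{V ∈ 𝒯} p(G[V])`. -/
noncomputable def sumT (G : SimpleGraph V) (d : ℕ) {k : ℕ} (f : V → Fin k)
    (𝒯 : Finset (Fin k)) : ℕ :=
  ∑ i ∈ 𝒯, pMinOn G d (cls f i)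

/-- Lexicographic comparison of triples of naturals. -/
def Lex3Le (x y : ℕ × ℕ × ℕ) : Prop :=
  x.1 < y.1 ∨ (x.1 = y.1 ∧ (x.2.1 < y.2.1 ∨ (x.2.1 = y.2.1 ∧ x.2.2 ≤ y.2.2)))

/-- The triple `(|C_k| − |C_1|, b, Σ_{V ∈ 𝒯} |V*|)` associated with a colouring `f` and a
choice `𝒯` of the set of classes `𝒯`. -/
noncomputable def tripleOf (G : SimpleGraph V) (d : ℕ) {k : ℕ} (f : V → Fin k)
    (𝒯 : Finset (Fin k)) : ℕ × ℕ × ℕ :=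
  (maxS f - minS f, (Bset G d f).card, sumT G d f 𝒯)

/-- The near-equitable `d`-degenerate colouring `f` (with its associated set `𝒯f`) is
minimal: its triple `(|C_k| − |C_1|, b, Σ_{V ∈ 𝒯} |V*|)` is lexicographically smallest
among all near-equitable `d`-degenerate `k`-colourings of `G` with their associated
choices of decomposition and `U_-`. -/
def MinimalNE (G : SimpleGraph V) (d : ℕ) {k : ℕ} (f : V → Fin k)
    (𝒯f : Finset (Fin k)) : Prop :=
  ∀ g : V → Fin k, IsDegenColoring G d g → NearEquitable (Fintype.card V) g →
    ∀ (q : ℕ) (hq : 0 < q) (𝒟 : Fin q → Finset (Fin k)) (trm : Fin q → Fin k),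
      IsDecomp G d g 𝒟 trm →
      ∀ U : Fin k,
        IsUminus G d g (𝒟 ⟨q - 1, by omega⟩) (trm ⟨q - 1, by omega⟩) U →
        Lex3Le (tripleOf G d f 𝒯f)
          (tripleOf G d g (TSet G d g (𝒟 ⟨q - 1, by omega⟩) (trm ⟨q - 1, by omega⟩) U))

/-- `G[S]` has an equitable `d`-degenerate `m`-colouring. -/
def HasEqDegenColOn (G : SimpleGraph V) (d : ℕ) (S : Finset V) (m : ℕ) : Prop :=
  ∃ g : V → Fin m,
    (∀ i, DegenOn G d (S.filter (fun v => g v = i))) ∧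
    (∀ i j, (S.filter (fun v => g v = i)).card ≤ (S.filter (fun v => g v = j)).card + 1)


-- ===================== Auxiliary lemmas =====================

section AuxLemmas

lemma degenOn_mono {G : SimpleGraph V} {d : ℕ} {S S' : Finset V}
    (hss : S' ⊆ S) (h : DegenOn G d S) : DegenOn G d S' :=
  fun s hs hne => h s (hs.trans hss) hne

lemma degenOn_insert {G : SimpleGraph V} {d : ℕ} {S : Finset V} (hd : 0 < d)
    (h : DegenOn G (d - 1) S) (v : V) : DegenOn G d (insert v S) := by
  intro s hs hne
  by_cases hv : v ∈ s
  · rcases (s.erase v).eq_empty_or_nonempty with he | hne'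
    · refine ⟨v, hv, ?_⟩
      have hs1 : s = {v} := by
        apply Finset.eq_singleton_iff_unique_mem.2
        refine ⟨hv, fun x hx => ?_⟩
        by_contra hxv
        exact absurd (Finset.mem_erase.2 ⟨hxv, hx⟩) (by simp [he])
      have : s.filter (fun u => G.Adj v u) = ∅ := by
        rw [hs1]; ext x; simp [G.irrefl]
        intro hx; subst hx; simp
      simp [this]
    · have hsub : s.erase v ⊆ S := by
        intro x hx
        have hxs := hs (Finset.mem_of_mem_erase hx)
        rcases Finset.mem_insert.1 hxs with h1 | h1
        · exact absurd h1 (Finset.mem_erase.1 hx).1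
        · exact h1
      obtain ⟨u, hu, hcard⟩ := h _ hsub hne'
      refine ⟨u, Finset.mem_of_mem_erase hu, ?_⟩
      have hsubf : s.filter (fun x => G.Adj u x) ⊆
          insert v ((s.erase v).filter (fun x => G.Adj u x)) := by
        intro x hx
        rcases Finset.mem_filter.1 hx with ⟨hxs, hadj⟩
        by_cases hxv : x = v
        · simp [hxv]
        · exact Finset.mem_insert_of_mem
            (Finset.mem_filter.2 ⟨Finset.mem_erase.2 ⟨hxv, hxs⟩, hadj⟩)
      calc (s.filter (fun x => G.Adj u x)).card
          ≤ (insert v ((s.erase v).filter (fun x => G.Adj u x))).card :=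
            Finset.card_le_card hsubf
        _ ≤ ((s.erase v).filter (fun x => G.Adj u x)).card + 1 :=
            Finset.card_insert_le _ _
        _ ≤ (d - 1) + 1 := by omega
        _ = d := by omega
  · have hsub : s ⊆ S := fun x hx =>
      (Finset.mem_insert.1 (hs hx)).resolve_left (by rintro rfl; exact hv hx)
    obtain ⟨u, hu, hc⟩ := h s hsub hne
    exact ⟨u, hu, hc.trans (by omega)⟩

lemma mem_cls {k : ℕ} {f : V → Fin k} {v : V} {i : Fin k} :
    v ∈ cls f i ↔ f v = i := by simp [cls]

lemma cls_update_target {k : ℕ} {f : V → Fin k} {v : V} {j : Fin k} (hvj : f v ≠ j) :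
    cls (Function.update f v j) j = insert v (cls f j) := by
  ext u
  by_cases h : u = v <;> simp [cls, Function.update_apply, h, hvj]

lemma cls_update_source {k : ℕ} {f : V → Fin k} {v : V} {j : Fin k} (hvj : f v ≠ j) :
    cls (Function.update f v j) (f v) = (cls f (f v)).erase v := by
  ext u
  by_cases h : u = v <;> simp [cls, Function.update_apply, h, Ne.symm hvj]

lemma cls_update_other {k : ℕ} {f : V → Fin k} {v : V} {j i : Fin k}
    (hij : i ≠ j) (hifv : i ≠ f v) : cls (Function.update f v j) i = cls f i := by
  ext u
  by_cases h : u = v <;> simp [cls, Function.update_apply, h, Ne.symm hij, Ne.symm hifv]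

lemma move_one {G : SimpleGraph V} {d k : ℕ} {f : V → Fin k} (hf : IsDegenColoring G d f)
    {v : V} {j : Fin k} (hm : Movable G d f v j) :
    IsDegenColoring G d (Function.update f v j) := by
  intro i
  by_cases hij : i = j
  · subst hij; rw [cls_update_target hm.1]; exact hm.2
  · by_cases hifv : i = f v
    · subst hifv; rw [cls_update_source hm.1]
      exact degenOn_mono (Finset.erase_subset _ _) (hf _)
    · rw [cls_update_other hij hifv]; exact hf i

lemma chain_nodup {α : Type*} {r : α → α → Prop} :
    ∀ (n : ℕ) (l : List α), l.length ≤ n → ∀ a, List.Chain r a l →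
      ∃ l', List.Chain r a l' ∧
        (a :: l').getLast (List.cons_ne_nil _ _) = (a :: l).getLast (List.cons_ne_nil _ _) ∧
        (a :: l').Nodup ∧ ∀ x ∈ l', x ∈ l := by
  intro n
  induction n with
  | zero =>
    intro l hl a _
    have : l = [] := List.length_eq_zero_iff.1 (Nat.le_zero.1 hl)
    subst this
    exact ⟨[], List.Chain.nil, rfl, by simp, by simp⟩
  | succ n ih =>
    intro l hl a hchain
    by_cases ha : a ∈ l
    · obtain ⟨l₁, l₂, rfl⟩ := List.append_of_mem ha
      have h2 : List.Chain r a l₂ := ((List.isChain_split (l₁ := a :: l₁)).1 hchain).2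
      have hlen : l₂.length ≤ n := by simp [List.length_append] at hl ⊢; omega
      obtain ⟨l', hc, hlast, hnd, hsub⟩ := ih l₂ hlen a h2
      refine ⟨l', hc, ?_, hnd, fun x hx => by
        simp [List.mem_append]; right; right; exact hsub x hx⟩
      rw [hlast]
      have : a :: (l₁ ++ a :: l₂) = (a :: l₁) ++ (a :: l₂) := by simp
      rw [List.getLast_congr _ (by simp) this, List.getLast_append_of_ne_nil _ (List.cons_ne_nil _ _)]
    · cases l with
      | nil => exact ⟨[], hchain, rfl, by simp, by simp⟩
      | cons c t =>
        have hr : r a c := (List.chain_cons.1 hchain).1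
        have hct : List.Chain r c t := (List.chain_cons.1 hchain).2
        obtain ⟨t', hc', hlast, hnd, hsub⟩ := ih t (by simp at hl; omega) c hct
        refine ⟨c :: t', List.chain_cons.2 ⟨hr, hc'⟩, ?_, ?_, ?_⟩
        · rw [List.getLast_cons_cons, List.getLast_cons_cons]; exact hlast
        · refine List.nodup_cons.2 ⟨?_, hnd⟩
          intro hmem
          rcases List.mem_cons.1 hmem with h1 | h1
          · exact ha (h1 ▸ List.mem_cons_self)
          · exact ha (List.mem_cons_of_mem c (hsub a h1))
        · intro x hx
          rcases List.mem_cons.1 hx with h1 | h1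
          · exact h1 ▸ List.mem_cons_self
          · exact List.mem_cons_of_mem c (hsub x h1)

lemma move_path {G : SimpleGraph V} {d k : ℕ} {f : V → Fin k}
    (hf : IsDegenColoring G d f) :
    ∀ (l : List (Fin k)) (w w' : Fin k),
      List.Chain (MvArc G d f) w (w' :: l) → (w :: w' :: l).Nodup →
      ∃ g : V → Fin k, IsDegenColoring G d g ∧
        cls g w ⊆ cls f w ∧ (cls g w).card + 1 = (cls f w).card ∧
        (cls g ((w' :: l).getLast (List.cons_ne_nil _ _))).card
          = (cls f ((w' :: l).getLast (List.cons_ne_nil _ _))).card + 1 ∧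
        (∀ j, j ≠ w → j ≠ (w' :: l).getLast (List.cons_ne_nil _ _) →
          (cls g j).card = (cls f j).card) ∧
        (∀ j, j ∉ w :: w' :: l → cls g j = cls f j) := by
  intro l
  induction l with
  | nil =>
    intro w w' hchain hnd
    obtain ⟨hne, v, hfv, hmov⟩ := (List.chain_cons.1 hchain).1
    refine ⟨Function.update f v w', move_one hf ⟨hfv ▸ hne, hmov.2⟩, ?_, ?_, ?_, ?_, ?_⟩
    · rw [show w = f v from hfv.symm, cls_update_source (hfv ▸ hne)]
      exact Finset.erase_subset _ _
    · rw [show w = f v from hfv.symm, cls_update_source (hfv ▸ hne)]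
      exact Finset.card_erase_add_one (mem_cls.2 rfl)
    · simp only [List.getLast_singleton]
      rw [cls_update_target (hfv ▸ hne)]
      rw [Finset.card_insert_of_notMem (by simp [mem_cls, hfv]; exact hne)]
    · intro j hjw hjw'
      simp only [List.getLast_singleton] at hjw'
      rw [cls_update_other hjw' (hfv ▸ hjw)]
    · intro j hj
      simp only [List.mem_cons, not_or] at hj
      rw [cls_update_other hj.2.1 (hfv ▸ hj.1)]
  | cons w'' t ih =>
    intro w w' hchain hnd
    have harc : MvArc G d f w w' := (List.chain_cons.1 hchain).1
    have hchain' : List.Chain (MvArc G d f) w' (w'' :: t) := (List.chain_cons.1 hchain).2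
    have hnd' : (w' :: w'' :: t).Nodup := (List.nodup_cons.1 hnd).2
    obtain ⟨g', hg'col, hg'sub, hg'card, hg'last, hg'other, hg'eq⟩ := ih w' w'' hchain' hnd'
    obtain ⟨hne, v, hfv, hmov⟩ := harc
    set z := (w'' :: t).getLast (List.cons_ne_nil _ _) with hz
    have hzmem : z ∈ w'' :: t := List.getLast_mem _
    have hwnot : w ∉ w' :: w'' :: t := (List.nodup_cons.1 hnd).1
    have hw'not : w' ∉ w'' :: t := (List.nodup_cons.1 hnd').1
    have hzw : z ≠ w := fun h => hwnot (h ▸ List.mem_cons_of_mem _ hzmem)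
    have hzw' : z ≠ w' := fun h => hw'not (h ▸ hzmem)
    have hlast2 : (w' :: w'' :: t).getLast (List.cons_ne_nil _ _) = z := by
      rw [List.getLast_cons_cons]
    have hclsw : cls g' w = cls f w := hg'eq w hwnot
    have hg'v : g' v = w := mem_cls.1 (hclsw ▸ mem_cls.2 hfv)
    have hvnotw' : v ∉ cls f w' := by simp [mem_cls, hfv]; exact hne
    have hmov' : Movable G d g' v w' := by
      refine ⟨hg'v ▸ hne, ?_⟩
      exact degenOn_mono (Finset.insert_subset_insert _ hg'sub) hmov.2
    set g := Function.update g' v w' with hgdef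
    have hclsgw : cls g w = (cls f w).erase v := by
      rw [hgdef, show w = g' v from hg'v.symm, cls_update_source (hg'v ▸ hmov'.1)]
      rw [hg'v, hclsw]
    have hclsgw' : cls g w' = insert v (cls g' w') := by
      rw [hgdef, cls_update_target hmov'.1]
    have hgother : ∀ j, j ≠ w' → j ≠ w → cls g j = cls g' j := by
      intro j h1 h2
      rw [hgdef, cls_update_other h1 (hg'v ▸ h2)]
    refine ⟨g, move_one hg'col hmov', ?_, ?_, ?_, ?_, ?_⟩
    · rw [hclsgw]; exact Finset.erase_subset _ _
    · rw [hclsgw, Finset.card_erase_add_one (mem_cls.2 hfv)]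
    · rw [hlast2, hgother z hzw' hzw]; exact hg'last
    · intro j hjw hjz
      rw [hlast2] at hjz
      by_cases hjw' : j = w'
      · subst hjw'
        rw [hclsgw', Finset.card_insert_of_notMem (fun h => hvnotw' (hg'sub h))]
        omega
      · rw [hgother j hjw' hjw]
        exact hg'other j hjw' hjz
    · intro j hj
      simp only [List.mem_cons, not_or] at hj
      rw [hgother j hj.2.1 hj.1]
      exact hg'eq j (by simp [List.mem_cons, not_or]; exact ⟨hj.2.1, hj.2.2.1, hj.2.2.2⟩)

lemma move_total {G : SimpleGraph V} {d k : ℕ} {f : V → Fin k}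
    (hf : IsDegenColoring G d f) {w z : Fin k} (hwz : w ≠ z)
    (hacc : AccTo G d f w z) :
    ∃ g : V → Fin k, IsDegenColoring G d g ∧
      (cls g z).card = (cls f z).card + 1 ∧
      (cls g w).card + 1 = (cls f w).card ∧
      ∀ j, j ≠ w → j ≠ z → (cls g j).card = (cls f j).card := by
  obtain ⟨l, hl, hlast⟩ := List.exists_isChain_cons_of_relationReflTransGen hacc
  obtain ⟨l', hc, hlast', hnd, _⟩ := chain_nodup l.length l le_rfl w hl
  rw [hlast] at hlast'
  cases l' with
  | nil => exact absurd hlast' hwz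
  | cons w' t =>
    have hlast2 : (w' :: t).getLast (List.cons_ne_nil _ _) = z := by
      rw [← hlast', List.getLast_cons_cons]
    obtain ⟨g, hgcol, h1, h2, h3, h4, _⟩ := move_path hf t w w' hc hnd
    rw [hlast2] at h3 h4
    exact ⟨g, hgcol, h3, h2, fun j hjw hjz => h4 j hjw hjz⟩

end AuxLemmas

-- ===================== Decomposition existence =====================

section Decomp

variable (G : SimpleGraph V) (d : ℕ) {k : ℕ} (g : V → Fin k) (hk : 0 < k)

noncomputable def minsetOf : Finset (Fin k) :=
  Finset.univ.filter (fun j => IsMinClass g j)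

noncomputable def nextT (S : Finset (Fin k)) : Fin k :=
  if h : (minsetOf g \ S).Nonempty then (minsetOf g \ S).min' h else ⟨0, hk⟩

noncomputable def nextD (S : Finset (Fin k)) : Finset (Fin k) :=
  Finset.univ.filter
    (fun u => Accessible G d g u ∧ u ∉ S ∧ AccTo G d g u (nextT g hk S))

noncomputable def usedN : ℕ → Finset (Fin k)
  | 0 => ∅
  | n + 1 => usedN n ∪ nextD G d g hk (usedN n)

include hk in
lemma minsetOf_nonempty : (minsetOf g).Nonempty := by
  obtain ⟨j, _, hj⟩ := Finset.exists_min_image Finset.univ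
    (fun j => (cls g j).card) ⟨⟨0, hk⟩, Finset.mem_univ _⟩
  exact ⟨j, Finset.mem_filter.2 ⟨Finset.mem_univ _, fun i => hj i (Finset.mem_univ _)⟩⟩

lemma usedN_mono {m n : ℕ} (h : m ≤ n) : usedN G d g hk m ⊆ usedN G d g hk n := by
  induction n with
  | zero => simp [Nat.le_zero.1 h]
  | succ n ih =>
    rcases Nat.lt_or_ge m (n+1) with h1 | h1
    · exact (ih (by omega)).trans (Finset.subset_union_left)
    · have : m = n + 1 := by omega
      subst this; exact subset_rfl

lemma usedN_eq_biUnion (n : ℕ) :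
    usedN G d g hk n
      = (Finset.range n).biUnion (fun m => nextD G d g hk (usedN G d g hk m)) := by
  induction n with
  | zero => simp [usedN]
  | succ n ih =>
    rw [Finset.range_add_one, Finset.biUnion_insert, ← ih, Finset.union_comm]
    rfl

lemma nextT_spec {S : Finset (Fin k)} (h : (minsetOf g \ S).Nonempty) :
    nextT g hk S ∈ minsetOf g \ S ∧
      ∀ j ∈ minsetOf g \ S, nextT g hk S ≤ j := by
  rw [nextT, dif_pos h]
  exact ⟨Finset.min'_mem _ h, fun j hj => Finset.min'_le _ j hj⟩

lemma step_decrease (n : ℕ) (h : (minsetOf g \ usedN G d g hk n).Nonempty) :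
    (minsetOf g \ usedN G d g hk (n+1)).card < (minsetOf g \ usedN G d g hk n).card := by
  apply Finset.card_lt_card
  constructor
  · exact Finset.sdiff_subset_sdiff subset_rfl (usedN_mono G d g hk (Nat.le_succ n))
  · intro hsub
    obtain ⟨hT, _⟩ := nextT_spec g hk h
    have hTmem : nextT g hk (usedN G d g hk n) ∈ minsetOf g \ usedN G d g hk n := hT
    have hmin : IsMinClass g (nextT g hk (usedN G d g hk n)) :=
      (Finset.mem_filter.1 (Finset.mem_sdiff.1 hTmem).1).2
    have hacc : Accessible G d g (nextT g hk (usedN G d g hk n)) :=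
      ⟨_, hmin, Relation.ReflTransGen.refl⟩
    have hmem2 : nextT g hk (usedN G d g hk n) ∈ usedN G d g hk (n+1) := by
      apply Finset.mem_union_right
      exact Finset.mem_filter.2 ⟨Finset.mem_univ _,
        hacc, (Finset.mem_sdiff.1 hTmem).2, Relation.ReflTransGen.refl⟩
    have := hsub hTmem
    exact (Finset.mem_sdiff.1 this).2 hmem2

lemma exists_exhaust : ∃ n, minsetOf g \ usedN G d (V := V) g hk n = ∅ := by
  by_contra hcon
  push_neg at hcon
  have key : ∀ n, (minsetOf g \ usedN G d g hk n).card + n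
      ≤ (minsetOf (V := V) g).card := by
    intro n
    induction n with
    | zero => simp [usedN]
    | succ n ih =>
      have hne : (minsetOf g \ usedN G d g hk n).Nonempty :=
        hcon n
      have := step_decrease G d g hk n hne
      omega
  have := key ((minsetOf (V := V) g).card + 1)
  have hne : (minsetOf g \ usedN G d g hk ((minsetOf (V := V) g).card + 1)).Nonempty :=
    hcon _
  have := Finset.card_pos.2 hne
  omega

end Decomp

lemma exists_decomp_uminus (G : SimpleGraph V) (d : ℕ) {k : ℕ} (hk : 0 < k)
    (g : V → Fin k) :
    ∃ (q : ℕ) (hq : 0 < q) (𝒟 : Fin q → Finset (Fin k)) (trm : Fin q → Fin k),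
      IsDecomp G d g 𝒟 trm ∧
      ∃ U, IsUminus G d g (𝒟 ⟨q - 1, by omega⟩) (trm ⟨q - 1, by omega⟩) U := by
  classical
  have hex := exists_exhaust G d g hk
  set q := Nat.find hex with hqdef
  have hqspec : minsetOf g \ usedN G d g hk q = ∅ := Nat.find_spec hex
  have hne_lt : ∀ m, m < q → (minsetOf g \ usedN G d g hk m).Nonempty := by
    intro m hm
    exact Finset.nonempty_iff_ne_empty.2 (Nat.find_min hex hm)
  have hq0 : 0 < q := by
    rcases Nat.eq_zero_or_pos q with h0 | h0
    · exfalso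
      have : minsetOf g \ usedN G d g hk 0 = ∅ := h0 ▸ hqspec
      have hne := minsetOf_nonempty g hk
      rw [show usedN G d g hk 0 = ∅ from rfl, Finset.sdiff_empty] at this
      rw [this] at hne; exact Finset.not_nonempty_empty hne
    · exact h0
  set 𝒟 : Fin q → Finset (Fin k) := fun i => nextD G d g hk (usedN G d g hk i.val)
    with h𝒟
  set trm : Fin q → Fin k := fun i => nextT g hk (usedN G d g hk i.val) with htrm
  have hUB : ∀ i : Fin q, UsedBefore 𝒟 i = usedN G d g hk i.val := by
    intro i
    ext x
    rw [usedN_eq_biUnion]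
    simp only [UsedBefore, Finset.mem_biUnion, Finset.mem_filter, Finset.mem_univ,
      true_and, Finset.mem_range, h𝒟, Fin.lt_def]
    constructor
    · rintro ⟨i', hi', hx⟩; exact ⟨i'.val, hi', hx⟩
    · rintro ⟨m, hm, hx⟩
      exact ⟨⟨m, by have := i.isLt; omega⟩, hm, hx⟩
  have hmemD : ∀ (m : ℕ) (u : Fin k), u ∈ nextD G d g hk (usedN G d g hk m) ↔
      Accessible G d g u ∧ u ∉ usedN G d g hk m ∧
        AccTo G d g u (nextT g hk (usedN G d g hk m)) := by
    intro m u
    simp [nextD]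
  have hdecomp : IsDecomp G d g 𝒟 trm := by
    refine ⟨?_, ?_, ?_⟩
    · intro i
      have hne := hne_lt i.val i.isLt
      obtain ⟨hmem, hleast⟩ := nextT_spec g hk hne
      rw [Finset.mem_sdiff] at hmem
      refine ⟨(Finset.mem_filter.1 hmem.1).2, ?_, ?_, ?_⟩
      · rw [hUB]; exact hmem.2
      · intro j hj hjnot
        rw [hUB] at hjnot
        exact hleast j (Finset.mem_sdiff.2
          ⟨Finset.mem_filter.2 ⟨Finset.mem_univ _, hj⟩, hjnot⟩)
      · intro u
        rw [hUB]
        exact hmemD i.val u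
    · intro j hj
      have hjq : j ∈ usedN G d g hk q := by
        by_contra hjn
        have : j ∈ minsetOf g \ usedN G d g hk q :=
          Finset.mem_sdiff.2 ⟨Finset.mem_filter.2 ⟨Finset.mem_univ _, hj⟩, hjn⟩
        rw [hqspec] at this; exact absurd this (Finset.notMem_empty _)
      rw [usedN_eq_biUnion] at hjq
      obtain ⟨m, hm, hx⟩ := Finset.mem_biUnion.1 hjq
      rw [Finset.mem_range] at hm
      exact ⟨⟨m, hm⟩, hx⟩
    · intro u hu
      by_cases huq : u ∈ usedN G d g hk q
      · rw [usedN_eq_biUnion] at huq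
        obtain ⟨m, hm, hx⟩ := Finset.mem_biUnion.1 huq
        rw [Finset.mem_range] at hm
        exact ⟨⟨m, hm⟩, hx⟩
      · exfalso
        obtain ⟨jm, hjmmin, hjmacc⟩ := hu
        have hjmq : jm ∈ usedN G d g hk q := by
          by_contra hjn
          have : jm ∈ minsetOf g \ usedN G d g hk q :=
            Finset.mem_sdiff.2 ⟨Finset.mem_filter.2 ⟨Finset.mem_univ _, hjmmin⟩, hjn⟩
          rw [hqspec] at this; exact absurd this (Finset.notMem_empty _)
        rw [usedN_eq_biUnion] at hjmq
        obtain ⟨m, hm, hx⟩ := Finset.mem_biUnion.1 hjmq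
        rw [Finset.mem_range] at hm
        have hxacc : AccTo G d g jm (nextT g hk (usedN G d g hk m)) :=
          ((hmemD m jm).1 hx).2.2
        have husucc : u ∉ usedN G d g hk (m + 1) :=
          fun h => huq (usedN_mono G d g hk (by omega) h)
        have hunot : u ∉ usedN G d g hk m ∧ u ∉ nextD G d g hk (usedN G d g hk m) := by
          constructor
          · exact fun h => husucc (Finset.mem_union_left _ h)
          · exact fun h => husucc (Finset.mem_union_right _ h)
        exact hunot.2 ((hmemD m u).2
          ⟨⟨jm, hjmmin, hjmacc⟩, hunot.1, hjmacc.trans hxacc⟩)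
  have hqm1 : q - 1 < q := by omega
  have hlastne : (𝒟 ⟨q - 1, hqm1⟩).Nonempty := by
    have hne := hne_lt (q - 1) hqm1
    obtain ⟨hmem, _⟩ := nextT_spec g hk hne
    rw [Finset.mem_sdiff] at hmem
    refine ⟨nextT g hk (usedN G d g hk (q - 1)), ?_⟩
    rw [h𝒟]
    refine (hmemD (q-1) _).2 ⟨⟨_, (Finset.mem_filter.1 hmem.1).2,
      Relation.ReflTransGen.refl⟩, hmem.2, Relation.ReflTransGen.refl⟩
  obtain ⟨U, hUmem, hUmin⟩ := Finset.exists_min_image (𝒟 ⟨q - 1, hqm1⟩)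
    (fun U' => (TSet G d g (𝒟 ⟨q - 1, hqm1⟩) (trm ⟨q - 1, hqm1⟩) U').card) hlastne
  exact ⟨q, hq0, 𝒟, trm, hdecomp, U, hUmem, fun U' hU' => hUmin U' hU'⟩

-- ===================== Core arithmetic contradiction =====================

lemma core_contra
    {G : SimpleGraph V} {d k : ℕ} (hk : 0 < k)
    (hnoeq : ¬ ∃ g : V → Fin k, IsDegenColoring G d g ∧ IsEquitable g)
    {f : V → Fin k} (hf : IsDegenColoring G d f)
    (hne : NearEquitable (Fintype.card V) f)
    {Tf : Finset (Fin k)} (hmin : MinimalNE G d f Tf)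
    {z jm : Fin k} (hjm : IsMinClass f jm)
    (hacc : AccTo G d f z jm)
    (hz : (cls f jm).card + 2 ≤ (cls f z).card) : False := by
  obtain ⟨h1, h2, h3, h4, h5, h6, h7⟩ := hne
  set n := Fintype.card V with hn
  set L := n / k with hL
  set Uc := (n + k - 1) / k with hUcdef
  set m := (cls f jm).card with hm
  have hUcL : Uc ≤ L + 1 := by
    have h' : (n + k - 1) ≤ n + k := by omega
    calc Uc ≤ (n + k) / k := Nat.div_le_div_right h'
      _ = L + 1 := Nat.add_div_right n hk
  have hmL : m ≤ L := by
    obtain ⟨i0, hi0⟩ := h4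
    exact (hjm i0).trans hi0
  have hcap : ∀ j, (cls f j).card ≤ m + 3 := fun j => h7 jm j
  have hwz : z ≠ jm := by intro h; rw [h] at hz; omega
  obtain ⟨g, hgcol, hgjm, hgz, hgother⟩ := move_total hf hwz hacc
  have equit_contra : ∀ c : ℕ,
      (∀ j, c ≤ (cls g j).card ∧ (cls g j).card ≤ c + 1) → False := by
    intro c hc
    exact hnoeq ⟨g, hgcol, fun i j => by
      have hi := (hc i).2; have hj := (hc j).1; omega⟩
  by_cases hcase : m < L
  · -- m = L - 1, unique small class jm
    have hmge : L - 1 ≤ m := (h1 jm).1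
    have hL1 : 1 ≤ L := by omega
    have hmeq : m + 1 = L := by omega
    have hsmall : ∀ j, j ≠ jm → L ≤ (cls f j).card := by
      intro j hjne
      by_contra hlt
      push_neg at hlt
      have hmem1 : j ∈ Finset.univ.filter (fun i => (cls f i).card < L) :=
        Finset.mem_filter.2 ⟨Finset.mem_univ _, hlt⟩
      have hmem2 : jm ∈ Finset.univ.filter (fun i => (cls f i).card < L) :=
        Finset.mem_filter.2 ⟨Finset.mem_univ _, by omega⟩
      exact hjne (Finset.card_le_one.1 h2 _ hmem1 _ hmem2)
    by_cases hbig : ∃ y, L + 2 ≤ (cls f y).card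
    · obtain ⟨y, hy⟩ := hbig
      have hyUc : Uc = L + 1 := by
        have := (h1 y).2; omega
      have hyc : (cls f y).card = L + 2 := by
        have := hcap y; omega
      have hyjm : y ≠ jm := by intro h; rw [h] at hyc; omega
      have hbig_uniq : ∀ j, j ≠ y → (cls f j).card ≤ Uc := by
        intro j hjne
        by_contra hlt
        push_neg at hlt
        have hmem1 : j ∈ Finset.univ.filter (fun i => Uc < (cls f i).card) :=
          Finset.mem_filter.2 ⟨Finset.mem_univ _, hlt⟩
        have hmem2 : y ∈ Finset.univ.filter (fun i => Uc < (cls f i).card) :=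
          Finset.mem_filter.2 ⟨Finset.mem_univ _, by omega⟩
        exact hjne (Finset.card_le_one.1 h3 _ hmem1 _ hmem2)
      by_cases hzy : z = y
      · -- moving from the unique big class: result is equitable
        apply equit_contra L
        intro j
        by_cases hjz : j = z
        · subst hjz
          have : (cls f j).card = L + 2 := hzy ▸ hyc
          omega
        · by_cases hjjm : j = jm
          · subst hjjm; omega
          · rw [hgother j hjz hjjm]
            have := hsmall j hjjm
            have := hbig_uniq j (fun h => hjz (h ▸ hzy ▸ rfl))
            omega
      · -- the minimality case: |C_k|-|C_1| drops from 3 to 2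
        have hzc : (cls f z).card = L + 1 := by
          have := hbig_uniq z hzy; omega
        have hyz : y ≠ z := fun h => hzy h.symm
        have hgy : (cls g y).card = L + 2 := by
          rw [hgother y hyz hyjm]; exact hyc
        have hgjm' : (cls g jm).card = L := by omega
        have hgz' : (cls g z).card = L := by omega
        have hglo : ∀ j, L ≤ (cls g j).card := by
          intro j
          by_cases hjz : j = z
          · subst hjz; omega
          · by_cases hjjm : j = jm
            · subst hjjm; omega
            · rw [hgother j hjz hjjm]; exact hsmall j hjjm
        have hghi : ∀ j, j ≠ y → (cls g j).card ≤ L + 1 := by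
          intro j hjy
          by_cases hjz : j = z
          · subst hjz; omega
          · by_cases hjjm : j = jm
            · subst hjjm; omega
            · rw [hgother j hjz hjjm]
              have := hbig_uniq j hjy; omega
        have hghi2 : ∀ j, (cls g j).card ≤ L + 2 := by
          intro j
          by_cases hjy : j = y
          · subst hjy; omega
          · have := hghi j hjy; omega
        have hgne : NearEquitable n g := by
          refine ⟨?_, ?_, ?_, ?_, ?_, ?_, ?_⟩
          · intro j
            refine ⟨?_, ?_⟩
            · have := hglo j; omega
            · have := hghi2 j; omega
          · have : Finset.univ.filter (fun i => (cls g i).card < n / k) = ∅ := by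
              apply Finset.filter_eq_empty_iff.2
              intro j _
              have := hglo j
              simp only [not_lt]
              omega
            rw [this]; simp
          · have hsub : Finset.univ.filter (fun i => (n + k - 1) / k < (cls g i).card)
                ⊆ {y} := by
              intro j hj
              rw [Finset.mem_filter] at hj
              rw [Finset.mem_singleton]
              by_contra hjy
              have := hghi j hjy
              omega
            calc _ ≤ ({y} : Finset (Fin k)).card := Finset.card_le_card hsub
              _ = 1 := Finset.card_singleton y
          · exact ⟨jm, by omega⟩
          · exact ⟨y, by omega⟩
          · exact ⟨jm, y, by omega⟩
          · intro i j
            have := hglo i; have := hghi2 j; omega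
        obtain ⟨q', hq', 𝒟', trm', hdec', U', hU'⟩ := exists_decomp_uminus G d hk g
        have hlex := hmin g hgcol (hn ▸ hgne) q' hq' 𝒟' trm' hdec' U' hU'
        have hfmax : maxS f = L + 2 := by
          apply le_antisymm
          · rw [maxS]
            apply Finset.sup_le
            intro j _
            have := (h1 j).2; omega
          · rw [maxS]
            have := Finset.le_sup (f := fun i => (cls f i).card) (Finset.mem_univ y)
            simpa [hyc] using this
        have hfmin : minS f = m := by
          rw [minS]
          apply le_antisymm
          · exact Nat.sInf_le ⟨jm, rfl⟩
          · apply le_csInf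
            · exact ⟨m, jm, rfl⟩
            · rintro x ⟨i, rfl⟩
              exact hjm i
        have hgmax : maxS g = L + 2 := by
          apply le_antisymm
          · rw [maxS]
            apply Finset.sup_le
            intro j _
            exact hghi2 j
          · rw [maxS]
            have := Finset.le_sup (f := fun i => (cls g i).card) (Finset.mem_univ y)
            simpa [hgy] using this
        have hgmin : minS g = L := by
          rw [minS]
          apply le_antisymm
          · have : (cls g jm).card = L := hgjm'
            exact this ▸ Nat.sInf_le ⟨jm, rfl⟩
          · apply le_csInf
            · exact ⟨(cls g jm).card, jm, rfl⟩
            · rintro x ⟨i, rfl⟩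
              exact hglo i
        simp only [tripleOf, Lex3Le] at hlex
        rw [hfmax, hfmin, hgmax, hgmin] at hlex
        rcases hlex with hbad | ⟨hbad, _⟩ <;> omega
    · -- no class of size ≥ L+2: result is equitable
      push_neg at hbig
      have hzc : (cls f z).card = L + 1 := by
        have := hbig z; omega
      apply equit_contra L
      intro j
      by_cases hjz : j = z
      · subst hjz; omega
      · by_cases hjjm : j = jm
        · subst hjjm; omega
        · rw [hgother j hjz hjjm]
          have := hsmall j hjjm
          have := hbig j
          omega
  · -- m = L : all classes have size ≥ L
    have hmeq : m = L := by omega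
    have hall : ∀ j, L ≤ (cls f j).card := fun j => hmeq ▸ hjm j
    have hzUc : (cls f z).card ≤ Uc + 1 := (h1 z).2
    have hzc : (cls f z).card = L + 2 := by omega
    have hUc2 : Uc = L + 1 := by omega
    have huniq : ∀ j, j ≠ z → (cls f j).card ≤ L + 1 := by
      intro j hjne
      by_contra hlt
      push_neg at hlt
      have hmem1 : j ∈ Finset.univ.filter (fun i => Uc < (cls f i).card) :=
        Finset.mem_filter.2 ⟨Finset.mem_univ _, by omega⟩
      have hmem2 : z ∈ Finset.univ.filter (fun i => Uc < (cls f i).card) :=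
        Finset.mem_filter.2 ⟨Finset.mem_univ _, by omega⟩
      exact hjne (Finset.card_le_one.1 h3 _ hmem1 _ hmem2)
    apply equit_contra L
    intro j
    by_cases hjz : j = z
    · subst hjz; omega
    · by_cases hjjm : j = jm
      · subst hjjm; omega
      · rw [hgother j hjz hjjm]
        have := hall j
        have := huniq j hjz
        omega

/-- **Lemma 2.4(a).**  Every accessible colour class `V` of the minimal near-equitable
`d`-degenerate `k`-colouring `f` satisfies `|V| − |C_-| ≤ 1` and `V* ≠ ∅`, i.e.
`G[V]` is not `(d−1)`-degenerate. -/
theorem accessible_class_size_and_Vstar_nonempty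
    (Δ d k : ℕ) (hΔ : 0 < Δ) (hd : 0 < d) (hk : 0 < k)
    (hΔk : Δ + 1 ≤ (d + 1) * k)
    (G : SimpleGraph V)
    (hdeg : ∀ v : V, (Finset.univ.filter (fun u => G.Adj v u)).card ≤ Δ)
    (hnoeq : ¬ ∃ g : V → Fin k, IsDegenColoring G d g ∧ IsEquitable g)
    (f : V → Fin k) (hf : IsDegenColoring G d f)
    (hne : NearEquitable (Fintype.card V) f)
    (q : ℕ) (hq : 0 < q) (𝒟 : Fin q → Finset (Fin k)) (trm : Fin q → Fin k)
    (hdec : IsDecomp G d f 𝒟 trm)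
    (Dl : Finset (Fin k)) (hDl : Dl = 𝒟 ⟨q - 1, by omega⟩)
    (Cm : Fin k) (hCm : Cm = trm ⟨q - 1, by omega⟩)
    (Um : Fin k) (hUm : IsUminus G d f Dl Cm Um)
    (Tf : Finset (Fin k)) (hTf : Tf = TSet G d f Dl Cm Um)
    (hmin : MinimalNE G d f Tf) :
    ∀ i : Fin k, Accessible G d f i →
      (cls f i).card ≤ (cls f Cm).card + 1 ∧ ¬ DegenOn G (d - 1) (cls f i) := by
  intro i hi
  have hCmmin : IsMinClass f Cm := by
    rw [hCm]; exact (hdec.1 ⟨q - 1, by omega⟩).1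
  have part1 : (cls f i).card ≤ (cls f Cm).card + 1 := by
    by_contra hgt
    push_neg at hgt
    obtain ⟨jm, hjmmin, hacc⟩ := hi
    have hcards : (cls f jm).card = (cls f Cm).card :=
      le_antisymm (hjmmin Cm) (hCmmin jm)
    exact core_contra hk hnoeq hf hne hmin hjmmin hacc (by omega)
  refine ⟨part1, ?_⟩
  intro hdg
  have hnek : Nonempty (Fin k) := ⟨⟨0, hk⟩⟩
  obtain ⟨zmax, _, hzm⟩ := Finset.exists_mem_eq_sup Finset.univ
    Finset.univ_nonempty (fun j : Fin k => (cls f j).card)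
  have hzmax_big : (cls f Cm).card + 2 ≤ (cls f zmax).card := by
    obtain ⟨a, b, hab⟩ := hne.2.2.2.2.2.1
    have ha : (cls f Cm).card ≤ (cls f a).card := hCmmin a
    have hb : (cls f b).card ≤ Finset.univ.sup (fun j : Fin k => (cls f j).card) :=
      Finset.le_sup (f := fun j : Fin k => (cls f j).card) (Finset.mem_univ b)
    rw [hzm] at hb
    omega
  have hzi : zmax ≠ i := by
    intro h
    rw [h] at hzmax_big
    omega
  have hclsne : (cls f zmax).Nonempty := Finset.card_pos.1 (by omega)
  obtain ⟨v, hv⟩ := hclsne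
  have hfv : f v = zmax := mem_cls.1 hv
  have harc : MvArc G d f zmax i :=
    ⟨hzi, v, hfv, ⟨by rw [hfv]; exact hzi, degenOn_insert hd hdg v⟩⟩
  obtain ⟨jm, hjmmin, hacc⟩ := hi
  have hacc2 : AccTo G d f zmax jm := Relation.ReflTransGen.head harc hacc
  have hcards : (cls f jm).card = (cls f Cm).card :=
    le_antisymm (hjmmin Cm) (hCmmin jm)
  exact core_contra hk hnoeq hf hne hmin hjmmin hacc2 (by omega)
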